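/- arXiv:2110.03978 — 3 statements merged into one kernel-verified Lean document; each statement's English description precedes it below -/
import Mathlib

section
/- Let M be a perfect matching of a graph G and S ⊆ M. Then S is a forcing set of M (i.e., M is the unique perfect matching of G containing S) if and only if every M-alternating cycle of G contains at least one edge of S. -/
open SimpleGraph

open scoped symmDiff

namespace ForcingAux

variable {V : Type*} {G : SimpleGraph V}

lemma mem_support_of_mem_edges' {u a b : V} {p : G.Walk a b} {e : Sym2 V}
    (he : e ∈ p.edges) (hu : u ∈ e) : u ∈ p.support := by
  induction e using Sym2.ind with
  | _ x y =>
    rcases Sym2.mem_iff.1 hu with rfl | rfl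
    · exact p.fst_mem_support_of_mem_edges he
    · exact p.snd_mem_support_of_mem_edges he

lemma eq_of_mem_edges_of_start {u b t : V} {h : G.Adj u b} {p : G.Walk b t}
    (hq : (Walk.cons h p).IsPath) {e : Sym2 V} (he : e ∈ (Walk.cons h p).edges)
    (hu : u ∈ e) : e = s(u, b) := by
  rw [Walk.edges_cons] at he
  rcases List.mem_cons.1 he with he | he
  · exact he
  · exact absurd (mem_support_of_mem_edges' he hu) ((Walk.cons_isPath_iff h p).1 hq).2

lemma path_edges_at_start {u t : V} {q : G.Walk u t} (hq : q.IsPath) {e₁ e₂ : Sym2 V}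
    (h₁ : e₁ ∈ q.edges) (h₂ : e₂ ∈ q.edges) (hu₁ : u ∈ e₁) (hu₂ : u ∈ e₂) : e₁ = e₂ := by
  cases q with
  | nil => simp at h₁
  | cons h p =>
    rw [eq_of_mem_edges_of_start hq h₁ hu₁, eq_of_mem_edges_of_start hq h₂ hu₂]

lemma cycle_start_neighbors {u : V} {q : G.Walk u u} (hq : q.IsCycle) :
    {x | s(u, x) ∈ q.edges}.ncard = 2 := by
  cases q with
  | nil => exact absurd Walk.Nil.nil hq.not_nil
  | cons h p =>
    rename_i b
    obtain ⟨hp, hne⟩ := (Walk.cons_isCycle_iff p h).1 hq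
    have hbu : u ≠ b := h.ne
    have hrnil : ¬ p.reverse.Nil := Walk.not_nil_of_ne hbu
    obtain ⟨d, hd, r', hr'⟩ := Walk.not_nil_iff.1 hrnil
    have hrpath : p.reverse.IsPath := hp.reverse
    have hd_mem : s(u, d) ∈ p.edges := by
      rw [← List.mem_reverse, ← Walk.edges_reverse, hr', Walk.edges_cons]
      exact List.mem_cons_self
    have hbd : b ≠ d := by
      rintro rfl
      exact hne hd_mem
    have hS : {x | s(u, x) ∈ (Walk.cons h p).edges} = {b, d} := by
      ext x
      simp only [Set.mem_setOf_eq, Walk.edges_cons, List.mem_cons, Set.mem_insert_iff,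
        Set.mem_singleton_iff]
      constructor
      · rintro (he | he)
        · exact Or.inl (Sym2.congr_right.1 he)
        · refine Or.inr ?_
          have he' : s(u, x) ∈ p.reverse.edges := by
            rwa [Walk.edges_reverse, List.mem_reverse]
          rw [hr'] at he' hrpath
          exact Sym2.congr_right.1 (eq_of_mem_edges_of_start hrpath he' (by simp))
      · rintro (rfl | rfl)
        · exact Or.inl rfl
        · exact Or.inr hd_mem
    rw [hS]
    exact Set.ncard_pair hbd

lemma cycle_neighbors {v u : V} {p : G.Walk v v} (hp : p.IsCycle) (hu : u ∈ p.support) :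
    {x | s(u, x) ∈ p.edges}.ncard = 2 := by
  classical
  have h2 := cycle_start_neighbors (hp.rotate hu)
  have hs : {x | s(u, x) ∈ (p.rotate u hu).edges} = {x | s(u, x) ∈ p.edges} := by
    ext x
    exact (Walk.rotate_edges p u hu).mem_iff
  rwa [hs] at h2

lemma exists_cycle_of_isCycles [Fintype V] {D : SimpleGraph V} (hD : D.IsCycles)
    {v w : V} (hvw : D.Adj v w) : ∃ (u : V) (c : D.Walk u u), c.IsCycle := by
  classical
  set Sset : Set ℕ := {n | ∃ (a : V) (b : V) (p : D.Walk a b), p.IsPath ∧ p.length = n} with hSset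
  have h1 : 1 ∈ Sset := by
    refine ⟨v, w, Walk.cons hvw Walk.nil, ?_, by simp⟩
    rw [Walk.cons_isPath_iff]
    exact ⟨Walk.IsPath.nil, by simp [hvw.ne]⟩
  have hbdd : BddAbove Sset := by
    refine ⟨Fintype.card V, fun n hn => ?_⟩
    obtain ⟨a, b, p, hp, rfl⟩ := hn
    exact le_of_lt hp.length_lt
  have hN : sSup Sset ∈ Sset := Nat.sSup_mem ⟨1, h1⟩ hbdd
  obtain ⟨u₀, v₀, p, hp, hlen⟩ := hN
  have hN1 : 1 ≤ sSup Sset := le_csSup hbdd h1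
  have hpnil : ¬ p.Nil := by
    rw [Walk.not_nil_iff_lt_length]; omega
  have hrnil : ¬ p.reverse.Nil := by
    rw [Walk.not_nil_iff_lt_length, Walk.length_reverse]
    rwa [Walk.not_nil_iff_lt_length] at hpnil
  have hv₀ : D.Adj v₀ (p.reverse.getVert 1) := by simpa using p.reverse.adj_getVert_succ (Walk.not_nil_iff_lt_length.1 hrnil)
  have hcard : (D.neighborSet v₀).ncard = 2 := hD ⟨_, hv₀⟩
  obtain ⟨a, b, hab, hset⟩ := Set.ncard_eq_two.1 hcard
  have ha : D.Adj v₀ a := by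
    have : a ∈ D.neighborSet v₀ := by rw [hset]; simp
    exact this
  have hb : D.Adj v₀ b := by
    have : b ∈ D.neighborSet v₀ := by rw [hset]; simp
    exact this
  -- at most one of the edges s(v₀,a), s(v₀,b) is in p
  have hone : s(v₀, a) ∉ p.edges ∨ s(v₀, b) ∉ p.edges := by
    by_contra hcon
    push_neg at hcon
    have h₁ : s(v₀, a) ∈ p.reverse.edges := by rw [Walk.edges_reverse, List.mem_reverse]; exact hcon.1
    have h₂ : s(v₀, b) ∈ p.reverse.edges := by rw [Walk.edges_reverse, List.mem_reverse]; exact hcon.2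
    have := path_edges_at_start hp.reverse h₁ h₂ (by simp) (by simp)
    exact hab (Sym2.congr_right.1 this)
  obtain ⟨w₀, hvw₀, hnotedge⟩ : ∃ w₀, D.Adj v₀ w₀ ∧ s(v₀, w₀) ∉ p.edges := by
    rcases hone with h | h
    · exact ⟨a, ha, h⟩
    · exact ⟨b, hb, h⟩
  by_cases hsup : w₀ ∈ p.support
  · refine ⟨w₀, Walk.cons hvw₀.symm (p.dropUntil w₀ hsup).reverse, ?_⟩
    rw [Walk.cons_isCycle_iff]
    constructor
    · exact (hp.dropUntil hsup).reverse
    · intro hmem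
      rw [Walk.edges_reverse, List.mem_reverse] at hmem
      have : s(w₀, v₀) ∈ p.edges := Walk.edges_dropUntil_subset p hsup hmem
      rw [Sym2.eq_swap] at this
      exact hnotedge this
  · exfalso
    have hext : (p.concat hvw₀).IsPath := by
      rw [← Walk.isPath_reverse_iff, Walk.reverse_concat]
      rw [Walk.cons_isPath_iff]
      exact ⟨hp.reverse, by rwa [Walk.support_reverse, List.mem_reverse]⟩
    have : p.length + 1 ∈ Sset := ⟨u₀, w₀, p.concat hvw₀, hext, by simp [Walk.length_concat]⟩
    have := le_csSup hbdd this
    omega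

end ForcingAux

open scoped symmDiff



open SimpleGraph

/-- The generalized Petersen graph `GP(n,k)`: vertices `u i = Sum.inl i`,
`v i = Sum.inr i`, edges `u i -- u (i+k)`, `u i -- v i`, `v i -- v (i+1)` (mod n). -/
def GP (n k : ℕ) : SimpleGraph (Fin n ⊕ Fin n) :=
  SimpleGraph.fromRel (fun a b =>
    match a, b with
    | Sum.inl i, Sum.inl j => (j : ℕ) = ((i : ℕ) + k) % n
    | Sum.inl i, Sum.inr j => i = j
    | Sum.inr i, Sum.inr j => (j : ℕ) = ((i : ℕ) + 1) % n
    | _, _ => False)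

/-- `S` is a forcing set of the perfect matching `M` of `G`:
`S` consists of edges of `M` and `M` is the unique perfect matching containing `S`. -/
def IsForcingSet {V : Type*} (G : SimpleGraph V) (M : G.Subgraph) (S : Set (Sym2 V)) : Prop :=
  S ⊆ M.edgeSet ∧
    ∀ M' : G.Subgraph, M'.IsPerfectMatching → S ⊆ M'.edgeSet → M' = M

/-- The forcing number `f(G,M)`: minimum cardinality of a forcing set of `M`. -/
noncomputable def forcingNum {V : Type*} (G : SimpleGraph V) (M : G.Subgraph) : ℕ :=
  sInf {k | ∃ S : Set (Sym2 V), IsForcingSet G M S ∧ S.ncard = k}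

/-- A cycle `p` of `G` is `M`-alternating: its edges lie alternately in `M` and outside `M`.
For a perfect matching `M` this is equivalent to saying that every vertex of the
cycle is covered by an edge of `M` lying on the cycle. -/
def IsAltCycle {V : Type*} (G : SimpleGraph V) (M : G.Subgraph) {v : V} (p : G.Walk v v) : Prop :=
  p.IsCycle ∧ ∀ u ∈ p.support, ∃ e ∈ p.edges, e ∈ M.edgeSet ∧ u ∈ e

/-- `C(G,M)`: the maximum number of pairwise vertex-disjoint `M`-alternating cycles of `G`. -/
noncomputable def maxDisjAltCycles {V : Type*} (G : SimpleGraph V) (M : G.Subgraph) : ℕ :=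
  sSup {k | ∃ c : Fin k → Σ v : V, G.Walk v v,
    (∀ i, IsAltCycle G M (c i).2) ∧
    Pairwise fun i j => List.Disjoint (c i).2.support (c j).2.support}

theorem stmt2 {V : Type*} [Fintype V] (G : SimpleGraph V) (M : G.Subgraph)
    (hM : M.IsPerfectMatching) (S : Set (Sym2 V)) (hS : S ⊆ M.edgeSet) :
    IsForcingSet G M S ↔
      ∀ (v : V) (p : G.Walk v v), IsAltCycle G M p → ∃ e ∈ p.edges, e ∈ S := by
  classical
  constructor
  · rintro ⟨-, hforce⟩ v p hp
    by_contra hno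
    push_neg at hno
    obtain ⟨hcyc, halt⟩ := hp
    set C : SimpleGraph V := p.toSubgraph.spanningCoe with hCdef
    have hCadj : ∀ a b : V, C.Adj a b ↔ s(a, b) ∈ p.edges := by
      intro a b
      rw [hCdef, Subgraph.spanningCoe_adj, ← Subgraph.mem_edgeSet, Walk.mem_edges_toSubgraph]
    have hCle : C ≤ G := p.toSubgraph.spanningCoe_le
    have hnb : ∀ u, C.neighborSet u = {x | s(u, x) ∈ p.edges} := by
      intro u; ext x; simp only [mem_neighborSet, hCadj, Set.mem_setOf_eq]
    have hCcyc : C.IsCycles := by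
      intro u hu
      obtain ⟨x, hx⟩ := hu
      rw [mem_neighborSet, hCadj] at hx
      rw [hnb]
      exact ForcingAux.cycle_neighbors hcyc (p.fst_mem_support_of_mem_edges hx)
    have hCalt : C.IsAlternating M.spanningCoe := by
      intro u w w' hww' huw huw'
      obtain ⟨x, hx, hxu⟩ := hM.1 (hM.2 u)
      have husup : u ∈ p.support := by
        rw [hCadj] at huw
        exact p.fst_mem_support_of_mem_edges huw
      obtain ⟨e, hep, heM, hue⟩ := halt u husup
      obtain ⟨z, rfl⟩ := Sym2.mem_iff_exists.1 hue
      have hz : M.Adj u z := Subgraph.mem_edgeSet.1 heM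
      obtain rfl : z = x := hxu z hz
      have hxC : C.Adj u z := (hCadj u z).2 hep
      have h2 : (C.neighborSet u).ncard = 2 := by
        rw [hnb]; exact ForcingAux.cycle_neighbors hcyc husup
      obtain ⟨a, b, hab, hset⟩ := Set.ncard_eq_two.1 h2
      have hmem : ∀ y, C.Adj u y → y = a ∨ y = b := by
        intro y hy
        have hyn : y ∈ C.neighborSet u := hy
        rw [hset] at hyn
        simpa using hyn
      have hxw : z = w ∨ z = w' := by
        have e1 := hmem _ hxC
        have e2 := hmem _ huw
        have e3 := hmem _ huw'
        rcases e1 with e1 | e1 <;> rcases e2 with e2 | e2 <;> rcases e3 with e3 | e3 <;>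
          first
            | exact absurd (e2.trans e3.symm) hww'
            | exact Or.inl (e1.trans e2.symm)
            | exact Or.inr (e1.trans e3.symm)
      simp only [Subgraph.spanningCoe_adj]
      rcases hxw with hzw | hzw'
      · exact iff_of_true (hzw ▸ hx) fun hc => hww' ((hxu w' hc).trans hzw).symm
      · exact iff_of_false (fun hc => hww' ((hxu w hc).trans hzw')) (not_not_intro (hzw' ▸ hx))
    have hle : M.spanningCoe ∆ C ≤ G := symmDiff_le_sup.trans (sup_le M.spanningCoe_le hCle)
    set M'' : G.Subgraph := SimpleGraph.toSubgraph (M.spanningCoe ∆ C) hle with hM''def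
    have hiff : ∀ a b : V, M''.Adj a b ↔ (M.spanningCoe ∆ C).Adj a b := fun a b => Iff.rfl
    have hpm'' : M''.IsPerfectMatching := by
      have h0 := Subgraph.IsPerfectMatching.symmDiff_of_isAlternating hM hCalt hCcyc
      rw [Subgraph.isPerfectMatching_iff] at h0 ⊢
      intro a
      obtain ⟨b, hb, hb'⟩ := h0 a
      exact ⟨b, (hiff a b).2 (by simpa using hb), fun y hy => hb' y (by simpa using (hiff a y).1 hy)⟩
    have hsub : S ⊆ M''.edgeSet := by
      intro e he
      revert he
      refine Sym2.ind (fun a b he => ?_) e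
      rw [Subgraph.mem_edgeSet, hiff]
      have hMab : M.Adj a b := Subgraph.mem_edgeSet.1 (hS he)
      have hCab : ¬ C.Adj a b := fun hc => hno _ ((hCadj a b).1 hc) he
      simp [symmDiff_def, hMab, hCab]
    have heq : M'' = M := hforce M'' hpm'' hsub
    obtain ⟨e, hep, heM, -⟩ := halt v p.start_mem_support
    revert hep heM
    refine Sym2.ind (fun a b hep heM => ?_) e
    have hMab : M.Adj a b := Subgraph.mem_edgeSet.1 heM
    have hCab : C.Adj a b := (hCadj a b).2 hep
    have hcontra : M''.Adj a b := heq ▸ hMab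
    rw [hiff] at hcontra
    simp [symmDiff_def, hMab, hCab] at hcontra
  · intro hhit
    refine ⟨hS, fun M' hM' hS' => ?_⟩
    by_contra hne
    set D : SimpleGraph V := M.spanningCoe ∆ M'.spanningCoe with hDdef
    have hDadj : ∀ a b : V,
        D.Adj a b ↔ (M.Adj a b ∧ ¬ M'.Adj a b) ∨ (M'.Adj a b ∧ ¬ M.Adj a b) := by
      intro a b
      rw [hDdef]
      simp only [symmDiff_def, sup_adj, sdiff_adj, Subgraph.spanningCoe_adj]
    have hab : ∃ a b, D.Adj a b := by
      by_contra h
      push_neg at h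
      apply hne
      apply Subgraph.ext
      · rw [Subgraph.isSpanning_iff.1 hM'.2, Subgraph.isSpanning_iff.1 hM.2]
      · funext a b
        have := h a b
        rw [hDadj] at this
        by_cases h1 : M.Adj a b <;> by_cases h2 : M'.Adj a b <;> simp_all
    obtain ⟨a, b, hab⟩ := hab
    have hDcycles : D.IsCycles := Subgraph.IsPerfectMatching.symmDiff_isCycles hM hM'
    have hDle : D ≤ G := symmDiff_le_sup.trans (sup_le M.spanningCoe_le M'.spanningCoe_le)
    obtain ⟨u, c, hc⟩ := ForcingAux.exists_cycle_of_isCycles hDcycles hab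
    have hcoe : ⇑(Hom.ofLE hDle) = id := rfl
    have hsupp : (c.mapLe hDle).support = c.support := by
      simp [Walk.mapLe, Walk.support_map, hcoe]
    have hedges : (c.mapLe hDle).edges = c.edges := by
      simp [Walk.mapLe, Walk.edges_map, hcoe, Sym2.map_id']
    have haltc : IsAltCycle G M (c.mapLe hDle) := by
      refine ⟨Walk.IsCycle.mapLe hDle hc, fun u' hu' => ?_⟩
      rw [hsupp] at hu'
      have hTu : {x | s(u', x) ∈ c.edges}.ncard = 2 := ForcingAux.cycle_neighbors hc hu'
      have hTsub : {x | s(u', x) ∈ c.edges} ⊆ D.neighborSet u' := by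
        intro x hx
        exact c.adj_of_mem_edges hx
      have hTne : {x | s(u', x) ∈ c.edges}.Nonempty := by
        apply Set.nonempty_of_ncard_ne_zero
        omega
      have hNne : (D.neighborSet u').Nonempty := hTne.mono hTsub
      have hN2 : (D.neighborSet u').ncard = 2 := hDcycles hNne
      have hTeq : {x | s(u', x) ∈ c.edges} = D.neighborSet u' :=
        Set.eq_of_subset_of_ncard_le hTsub (by omega) (Set.toFinite _)
      obtain ⟨x, hx, hxu⟩ := hM.1 (hM.2 u')
      obtain ⟨y, hy, hyu⟩ := hM'.1 (hM'.2 u')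
      obtain ⟨a', b', ha'b', hNset⟩ := Set.ncard_eq_two.1 hN2
      have hmemxy : ∀ z ∈ D.neighborSet u', z = x ∨ z = y := by
        intro z hz
        have hz' : D.Adj u' z := hz
        rw [hDadj] at hz'
        rcases hz' with ⟨h1, -⟩ | ⟨h1, -⟩
        · exact Or.inl (hxu z h1)
        · exact Or.inr (hyu z h1)
      have hxN : x ∈ D.neighborSet u' := by
        have ha' : a' ∈ D.neighborSet u' := by rw [hNset]; simp
        have hb' : b' ∈ D.neighborSet u' := by rw [hNset]; simp
        rcases hmemxy a' ha' with rfl | rfl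
        · exact ha'
        · rcases hmemxy b' hb' with rfl | rfl
          · exact hb'
          · exact absurd rfl ha'b'
      have hxT : s(u', x) ∈ c.edges := by
        have : x ∈ {x | s(u', x) ∈ c.edges} := hTeq ▸ hxN
        exact this
      refine ⟨s(u', x), by rw [hedges]; exact hxT, Subgraph.mem_edgeSet.2 hx, by simp⟩
    obtain ⟨e, hec, heS⟩ := hhit u (c.mapLe hDle) haltc
    rw [hedges] at hec
    have heD : e ∈ D.edgeSet := c.edges_subset_edgeSet hec
    have heM : e ∈ M.edgeSet := hS heS
    have heM' : e ∈ M'.edgeSet := hS' heS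
    revert heD heM heM'
    refine Sym2.ind (fun a' b' hD1 hM1 hM1' => ?_) e
    rw [SimpleGraph.mem_edgeSet, hDadj] at hD1
    rw [Subgraph.mem_edgeSet] at hM1 hM1'
    tauto
end

section
/- For every perfect matching M of a graph G, the forcing number f(G,M) is at least C(G,M), the maximum number of pairwise vertex-disjoint M-alternating cycles in G. -/
open SimpleGraph
open scoped symmDiff

section Aux


open scoped symmDiff

variable {V : Type*} {G : SimpleGraph V}

private lemma toSubgraph_adj_start {x y x' : V}
    {q : G.Walk x y} (hq : q.IsPath) :
    q.toSubgraph.Adj x x' ↔ (¬ q.Nil ∧ x' = q.getVert 1) := by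
  cases q with
  | nil => simp [Walk.toSubgraph]
  | @cons _ z _ h r =>
    rw [Walk.cons_isPath_iff] at hq
    rw [Walk.toSubgraph]
    simp only [Subgraph.sup_adj, subgraphOfAdj_adj]
    constructor
    · rintro (he | hadj)
      · rw [Sym2.eq_iff] at he
        refine ⟨Walk.not_nil_cons, ?_⟩
        rcases he with ⟨-, rfl⟩ | ⟨h1, h2⟩
        · simp
        · exact absurd h2.symm h.ne
      · exact absurd ((Walk.mem_verts_toSubgraph r).mp hadj.fst_mem) hq.2
    · rintro ⟨-, rfl⟩
      left
      simp [Sym2.eq_iff]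

private lemma toSubgraph_adj_end {x y x' : V}
    {q : G.Walk x y} (hq : q.IsPath) :
    q.toSubgraph.Adj y x' ↔ (¬ q.Nil ∧ x' = q.reverse.getVert 1) := by
  have hnil : q.reverse.Nil ↔ q.Nil := by
    exact Walk.nil_reverse
  rw [← Walk.toSubgraph_reverse, toSubgraph_adj_start hq.reverse, hnil]

private lemma cycle_adj_start {v : V} {c : G.Walk v v} (hc : c.IsCycle) :
    ∃ a b : V, a ≠ b ∧ ∀ x, (c.toSubgraph.Adj v x ↔ (x = a ∨ x = b)) := by
  cases c with
  | nil => exact absurd hc Walk.IsCycle.not_of_nil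
  | @cons _ w _ h q =>
    rw [Walk.cons_isCycle_iff] at hc
    obtain ⟨hq, he⟩ := hc
    have hqn : ¬ q.Nil := fun hn => G.irrefl (hn.eq ▸ h)
    refine ⟨w, q.reverse.getVert 1, ?_, ?_⟩
    · intro hw
      apply he
      have hadj : q.toSubgraph.Adj v w := (toSubgraph_adj_end hq).mpr ⟨hqn, hw⟩
      exact (Walk.mem_edges_toSubgraph q).mp (Subgraph.mem_edgeSet.mpr hadj)
    · intro x
      rw [Walk.toSubgraph]
      simp only [Subgraph.sup_adj, subgraphOfAdj_adj]
      rw [toSubgraph_adj_end hq]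
      constructor
      · rintro (hsym | ⟨-, rfl⟩)
        · rw [Sym2.eq_iff] at hsym
          rcases hsym with ⟨-, rfl⟩ | ⟨h1, h2⟩
          · exact Or.inl rfl
          · exact absurd h2.symm h.ne
        · exact Or.inr rfl
      · rintro (rfl | rfl)
        · left; rfl
        · right; exact ⟨hqn, rfl⟩

private lemma cycle_adj [DecidableEq V] {v u : V} {c : G.Walk v v} (hc : c.IsCycle)
    (hu : u ∈ c.support) :
    ∃ a b : V, a ≠ b ∧ ∀ x, (c.toSubgraph.Adj u x ↔ (x = a ∨ x = b)) := by
  obtain ⟨a, b, hab, hiff⟩ := cycle_adj_start (hc.rotate hu)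
  refine ⟨a, b, hab, fun x => ?_⟩
  rw [← Walk.toSubgraph_rotate c hu]
  exact hiff x

end Aux

section Key

variable {V : Type*} {G : SimpleGraph V}

private lemma exists_matched_edge {M : G.Subgraph} {u : V} {e : Sym2 V} (hue : u ∈ e)
    (heM : e ∈ M.edgeSet) : ∃ z, M.Adj u z ∧ s(u, z) = e := by
  obtain ⟨x, y, rfl⟩ : ∃ x y, e = s(x, y) := by
    induction e using Sym2.ind with | _ x y => exact ⟨x, y, rfl⟩
  rw [Sym2.mem_iff] at hue
  rw [Subgraph.mem_edgeSet] at heM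
  rcases hue with rfl | rfl
  · exact ⟨y, heM, rfl⟩
  · exact ⟨x, heM.symm, Sym2.eq_swap⟩

private lemma forcing_meets_cycle {M : G.Subgraph}
    (hM : M.IsPerfectMatching) {v : V} {p : G.Walk v v} (hp : IsAltCycle G M p)
    {S : Set (Sym2 V)} (hS : IsForcingSet G M S) : ∃ e ∈ S, e ∈ p.edges := by
  classical
  by_contra hcon
  push_neg at hcon
  obtain ⟨hcyc, halt⟩ := hp
  set Gc := p.toSubgraph.spanningCoe with hGc
  have hGcadj : ∀ a b : V, Gc.Adj a b ↔ p.toSubgraph.Adj a b := fun _ _ => Iff.rfl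
  have hGcsup : ∀ {a b : V}, Gc.Adj a b → a ∈ p.support := fun h =>
    (Walk.mem_verts_toSubgraph p).mp (Subgraph.Adj.fst_mem h)
  -- the cycle graph consists of cycles
  have hcycles : Gc.IsCycles := by
    intro u hu
    obtain ⟨x, hx⟩ := hu
    obtain ⟨a, b, hab, hiff⟩ := cycle_adj hcyc (hGcsup hx)
    have hset : Gc.neighborSet u = {a, b} := by
      ext y
      simp only [mem_neighborSet, Set.mem_insert_iff, Set.mem_singleton_iff]
      exact hiff y
    rw [hset, Set.ncard_pair hab]
  -- alternating
  have halt' : Gc.IsAlternating M.spanningCoe := by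
    intro u w w' hww' hw hw'
    obtain ⟨e, hep, heM, hue⟩ := halt u (hGcsup hw)
    obtain ⟨z, hz, hze⟩ := exists_matched_edge hue heM
    have hGz : Gc.Adj u z := by
      rw [hGcadj, ← Subgraph.mem_edgeSet, Walk.mem_edges_toSubgraph, hze]
      exact hep
    obtain ⟨a, b, hab, hiff⟩ := cycle_adj hcyc (hGcsup hw)
    obtain ⟨t, -, ht⟩ := Subgraph.isPerfectMatching_iff.mp hM u
    have hzw : z = w ∨ z = w' := by
      rcases (hiff z).mp hGz with rfl | rfl
      · rcases (hiff w).mp hw with rfl | rfl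
        · exact Or.inl rfl
        · rcases (hiff w').mp hw' with rfl | rfl
          · exact Or.inr rfl
          · exact absurd rfl hww'
      · rcases (hiff w).mp hw with rfl | rfl
        · rcases (hiff w').mp hw' with rfl | rfl
          · exact absurd rfl hww'
          · exact Or.inr rfl
        · exact Or.inl rfl
    simp only [Subgraph.spanningCoe_adj]
    rcases hzw with rfl | rfl
    · simp only [hz, true_iff]
      intro hc
      exact hww' ((ht _ hz).trans (ht _ hc).symm)
    · simp only [hz, not_true_eq_false, iff_false, not_not]
      intro hc
      exact hww' ((ht _ hc).trans (ht _ hz).symm)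
  have hle : M.spanningCoe ∆ Gc ≤ G := by
    intro a b hab
    simp only [symmDiff_def, sup_adj, sdiff_adj, Subgraph.spanningCoe_adj] at hab
    rcases hab with ⟨h1, -⟩ | ⟨h1, -⟩
    · exact M.adj_sub h1
    · exact p.toSubgraph.adj_sub h1
  set N : G.Subgraph := SimpleGraph.toSubgraph (M.spanningCoe ∆ Gc) hle with hN
  have hNadj : ∀ a b : V, N.Adj a b ↔ (M.Adj a b ∧ ¬ Gc.Adj a b) ∨ (Gc.Adj a b ∧ ¬ M.Adj a b) := by
    intro a b
    simp only [hN, SimpleGraph.toSubgraph_adj, symmDiff_def, sup_adj, sdiff_adj,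
      Subgraph.spanningCoe_adj]
  have hNpm : N.IsPerfectMatching := by
    have h0 := Subgraph.IsPerfectMatching.symmDiff_of_isAlternating hM halt' hcycles
    rw [Subgraph.isPerfectMatching_iff] at h0 ⊢
    intro u
    obtain ⟨w, hw, hw'⟩ := h0 u
    refine ⟨w, by simpa [hN] using hw, fun y hy => hw' y (by simpa [hN] using hy)⟩
  have hSN : S ⊆ N.edgeSet := by
    intro f hf
    obtain ⟨x, y, rfl⟩ : ∃ x y, f = s(x, y) := by
      induction f using Sym2.ind with | _ x y => exact ⟨x, y, rfl⟩
    have hfM : M.Adj x y := Subgraph.mem_edgeSet.mp (hS.1 hf)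
    have hfc : ¬ Gc.Adj x y := by
      intro h
      exact hcon _ hf ((Walk.mem_edges_toSubgraph p).mp (Subgraph.mem_edgeSet.mpr h))
    rw [Subgraph.mem_edgeSet, hNadj]
    exact Or.inl ⟨hfM, hfc⟩
  have hNM : N = M := hS.2 N hNpm hSN
  obtain ⟨f, hfp, hfM, hvf⟩ := halt v (Walk.start_mem_support p)
  obtain ⟨z, hz, hze⟩ := exists_matched_edge hvf hfM
  have hGcvz : Gc.Adj v z := by
    rw [hGcadj, ← Subgraph.mem_edgeSet, Walk.mem_edges_toSubgraph, hze]
    exact hfp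
  have hNvz : N.Adj v z := by rw [hNM]; exact hz
  rw [hNadj] at hNvz
  rcases hNvz with ⟨-, hc⟩ | ⟨-, hc⟩ <;> exact hc (by assumption)

end Key


section Main

variable {V : Type*} {G : SimpleGraph V}

private lemma forcing_self {M : G.Subgraph} (hM : M.IsPerfectMatching) :
    IsForcingSet G M M.edgeSet := by
  refine ⟨subset_rfl, fun M' hM' hsub => ?_⟩
  apply Subgraph.ext
  · rw [hM'.2.verts_eq_univ, hM.2.verts_eq_univ]
  · ext a b
    constructor
    · intro h
      obtain ⟨z, hz, -⟩ := Subgraph.isPerfectMatching_iff.mp hM a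
      have hz' : M'.Adj a z := Subgraph.mem_edgeSet.mp (hsub (Subgraph.mem_edgeSet.mpr hz))
      obtain ⟨t, -, ht⟩ := Subgraph.isPerfectMatching_iff.mp hM' a
      rw [(ht b h).trans (ht z hz').symm]
      exact hz
    · intro h
      exact Subgraph.mem_edgeSet.mp (hsub (Subgraph.mem_edgeSet.mpr h))

private lemma not_support_disjoint {u v : V} {p : G.Walk u u} {q : G.Walk v v} {e : Sym2 V}
    (hp : e ∈ p.edges) (hq : e ∈ q.edges) : ¬ List.Disjoint p.support q.support := by
  intro hd
  obtain ⟨x, y, rfl⟩ : ∃ x y, e = s(x, y) := by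
    induction e using Sym2.ind with | _ x y => exact ⟨x, y, rfl⟩
  exact hd (Walk.fst_mem_support_of_mem_edges p hp) (Walk.fst_mem_support_of_mem_edges q hq)

end Main

theorem stmt3 {V : Type*} [Fintype V] (G : SimpleGraph V) (M : G.Subgraph)
    (hM : M.IsPerfectMatching) :
    maxDisjAltCycles G M ≤ forcingNum G M := by
  classical
  refine le_csInf ⟨M.edgeSet.ncard, M.edgeSet, forcing_self hM, rfl⟩ ?_
  rintro n ⟨S, hS, rfl⟩
  refine csSup_le ⟨0, fun i => i.elim0, fun i => i.elim0, fun i j h => i.elim0⟩ ?_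
  rintro k ⟨c, hcalt, hcdisj⟩
  choose e he hep using fun i => forcing_meets_cycle hM (hcalt i) hS
  have hinj : Function.Injective (fun i => (⟨e i, he i⟩ : S)) := by
    intro i j hij
    by_contra hne
    simp only [Subtype.mk.injEq] at hij
    exact not_support_disjoint (hep i) (hij ▸ hep j) (hcdisj hne)
  have hfin : Finite S := Set.Finite.to_subtype (Set.toFinite S)
  have := Nat.card_le_card_of_injective _ hinj
  rwa [Nat.card_eq_fintype_card, Fintype.card_fin, Nat.card_coe_set_eq] at this
end

section
/- Every perfect matching of the Petersen graph GP(5,2) has forcing number exactly 2; equivalently, the forcing polynomial of GP(5,2) is 6x^2. -/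
open SimpleGraph

/-! ### Auxiliary development -/

abbrev V5 := Fin 5 ⊕ Fin 5

def relB : V5 → V5 → Bool
  | Sum.inl i, Sum.inl j => (j : ℕ) == ((i : ℕ) + 2) % 5
  | Sum.inl i, Sum.inr j => i == j
  | Sum.inr i, Sum.inr j => (j : ℕ) == ((i : ℕ) + 1) % 5
  | _, _ => false

lemma GP_adj (a b : V5) : (GP 5 2).Adj a b ↔ a ≠ b ∧ (relB a b ∨ relB b a) := by
  rw [GP, SimpleGraph.fromRel_adj]
  cases a <;> cases b <;> simp [relB]

instance : DecidableRel (GP 5 2).Adj := fun a b => decidable_of_iff' _ (GP_adj a b)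

/-- The three neighbours of each vertex of `GP 5 2`. -/
def nbr : V5 → Fin 3 → V5
  | Sum.inl i, 0 => Sum.inl (i + 2)
  | Sum.inl i, 1 => Sum.inl (i + 3)
  | Sum.inl i, _ => Sum.inr i
  | Sum.inr i, 0 => Sum.inr (i + 1)
  | Sum.inr i, 1 => Sum.inr (i + 4)
  | Sum.inr i, _ => Sum.inl i

lemma nbr_adj : ∀ (v : V5) (i : Fin 3), (GP 5 2).Adj v (nbr v i) := by decide

lemma adj_to_nbr : ∀ v w : V5, (GP 5 2).Adj v w → ∃ i, nbr v i = w := by decide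

/-- The perfect matching using exactly one spoke, at position `k`. -/
def fOne (k : Fin 5) : V5 → V5
  | Sum.inl j =>
      if j = k then Sum.inr k
      else if j = k + 1 then Sum.inl (k + 3)
      else if j = k + 2 then Sum.inl (k + 4)
      else if j = k + 3 then Sum.inl (k + 1)
      else Sum.inl (k + 2)
  | Sum.inr j =>
      if j = k then Sum.inl k
      else if j = k + 1 then Sum.inr (k + 2)
      else if j = k + 2 then Sum.inr (k + 1)
      else if j = k + 3 then Sum.inr (k + 4)
      else Sum.inr (k + 3)

/-- The six perfect matchings of `GP 5 2`, as pairing functions. -/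
def fM : Fin 6 → V5 → V5
  | ⟨0, _⟩ => Sum.elim Sum.inr Sum.inl
  | ⟨m + 1, _⟩ => fOne ⟨m, by omega⟩

lemma fM_adj : ∀ (m : Fin 6) (a : V5), (GP 5 2).Adj a (fM m a) := by decide

lemma fM_inv : ∀ (m : Fin 6) (a : V5), fM m (fM m a) = a := by decide

lemma fM_injective' : ∀ m m' : Fin 6, (∀ a, fM m a = fM m' a) → m = m' := by decide

lemma singleton_not_forcing : ∀ (m : Fin 6) (a : V5), ∃ m', m' ≠ m ∧ fM m' a = fM m a := by
  decide

lemma two_force : ∀ m : Fin 6, ∃ a b : V5,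
    s(a, fM m a) ≠ s(b, fM m b) ∧
    ∀ m', fM m' a = fM m a → fM m' b = fM m b → m' = m := by decide

def mk5 (a0 a1 a2 a3 a4 : Fin 3) : Fin 5 → Fin 3
  | ⟨0, _⟩ => a0
  | ⟨1, _⟩ => a1
  | ⟨2, _⟩ => a2
  | ⟨3, _⟩ => a3
  | ⟨_, _⟩ => a4

set_option maxHeartbeats 4000000 in
/-- Brute-force classification: every involutive neighbour-selection is one of the
six matchings. -/
lemma key : ∀ a0 a1 a2 a3 a4 : Fin 3,
    (∀ i j : Fin 5, nbr (Sum.inl i) (mk5 a0 a1 a2 a3 a4 i) = Sum.inl j →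
      nbr (Sum.inl j) (mk5 a0 a1 a2 a3 a4 j) = Sum.inl i) →
    ∀ b0 b1 b2 b3 b4 : Fin 3,
    (∀ v : V5, nbr (nbr v (Sum.elim (mk5 a0 a1 a2 a3 a4) (mk5 b0 b1 b2 b3 b4) v))
        (Sum.elim (mk5 a0 a1 a2 a3 a4) (mk5 b0 b1 b2 b3 b4)
          (nbr v (Sum.elim (mk5 a0 a1 a2 a3 a4) (mk5 b0 b1 b2 b3 b4) v))) = v) →
    ∃ m : Fin 6, ∀ v, nbr v (Sum.elim (mk5 a0 a1 a2 a3 a4) (mk5 b0 b1 b2 b3 b4) v) = fM m v := by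
  decide

lemma key' (ga gb : Fin 5 → Fin 3)
    (hu : ∀ i j : Fin 5, nbr (Sum.inl i) (ga i) = Sum.inl j →
      nbr (Sum.inl j) (ga j) = Sum.inl i)
    (hinv : ∀ v : V5, nbr (nbr v (Sum.elim ga gb v))
        (Sum.elim ga gb (nbr v (Sum.elim ga gb v))) = v) :
    ∃ m : Fin 6, ∀ v, nbr v (Sum.elim ga gb v) = fM m v := by
  have e1 : mk5 (ga 0) (ga 1) (ga 2) (ga 3) (ga 4) = ga := by
    funext i
    match i with
    | ⟨0, _⟩ => rfl
    | ⟨1, _⟩ => rfl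
    | ⟨2, _⟩ => rfl
    | ⟨3, _⟩ => rfl
    | ⟨4, _⟩ => rfl
  have e2 : mk5 (gb 0) (gb 1) (gb 2) (gb 3) (gb 4) = gb := by
    funext i
    match i with
    | ⟨0, _⟩ => rfl
    | ⟨1, _⟩ => rfl
    | ⟨2, _⟩ => rfl
    | ⟨3, _⟩ => rfl
    | ⟨4, _⟩ => rfl
  rw [← e1] at hu
  rw [← e1, ← e2] at hinv ⊢
  exact key (ga 0) (ga 1) (ga 2) (ga 3) (ga 4) hu (gb 0) (gb 1) (gb 2) (gb 3) (gb 4) hinv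

/-- The six perfect matchings as subgraphs. -/
def pmSub (m : Fin 6) : (GP 5 2).Subgraph where
  verts := Set.univ
  Adj a b := fM m a = b
  adj_sub := by rintro a b rfl; exact fM_adj m a
  edge_vert := fun _ => Set.mem_univ _
  symm := ⟨by rintro a b rfl; exact fM_inv m a⟩

lemma pmSub_pm (m : Fin 6) : (pmSub m).IsPerfectMatching := by
  rw [Subgraph.isPerfectMatching_iff]
  exact fun v => ⟨fM m v, rfl, fun w h => Eq.symm (show fM m v = w from h)⟩

lemma pmSub_injective : Function.Injective pmSub := by
  intro m m' h
  refine fM_injective' m m' fun a => ?_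
  have h1 : (pmSub m).Adj a (fM m a) := rfl
  rw [h] at h1
  exact Eq.symm (show fM m' a = fM m a from h1)

lemma classify (M : (GP 5 2).Subgraph) (hM : M.IsPerfectMatching) : ∃ m, M = pmSub m := by
  have hM' := Subgraph.isPerfectMatching_iff.mp hM
  have hf : ∀ v : V5, ∃ i : Fin 3, M.Adj v (nbr v i) := by
    intro v
    obtain ⟨w, hw, -⟩ := hM' v
    obtain ⟨i, hi⟩ := adj_to_nbr v w (M.adj_sub hw)
    exact ⟨i, hi ▸ hw⟩
  choose g hg using hf
  have hinv : ∀ v, nbr (nbr v (g v)) (g (nbr v (g v))) = v :=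
    fun v => (hM' (nbr v (g v))).unique (hg _) ((M.adj_symm (hg v)))
  have hu : ∀ i j : Fin 5, nbr (Sum.inl i) (g (Sum.inl i)) = Sum.inl j →
      nbr (Sum.inl j) (g (Sum.inl j)) = Sum.inl i := by
    intro i j hij
    have h := hinv (Sum.inl i)
    rwa [hij] at h
  have heq : Sum.elim (fun i => g (Sum.inl i)) (fun i => g (Sum.inr i)) = g := by
    funext v; rcases v with i | i <;> rfl
  obtain ⟨m, hm⟩ := key' (fun i => g (Sum.inl i)) (fun i => g (Sum.inr i)) hu
    (by rw [heq]; exact hinv)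
  rw [heq] at hm
  have hm' : ∀ v : V5, nbr v (g v) = fM m v := hm
  have hAdj : ∀ v, M.Adj v (fM m v) := fun v => hm' v ▸ hg v
  refine ⟨m, Subgraph.ext ?_ ?_⟩
  · exact Set.eq_univ_of_forall hM.2
  · funext a b
    apply propext
    constructor
    · intro hab
      exact ((hM' a).unique (hAdj a) hab : fM m a = b)
    · intro (hab : fM m a = b)
      exact hab ▸ hAdj a

lemma singleton_not_forcing' (m : Fin 6) (e : Sym2 V5) (he : e ∈ (pmSub m).edgeSet) :
    ∃ m', m' ≠ m ∧ e ∈ (pmSub m').edgeSet := by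
  induction e using Sym2.ind with
  | _ x y =>
    rw [Subgraph.mem_edgeSet] at he
    obtain ⟨m', hne, heq⟩ := singleton_not_forcing m x
    exact ⟨m', hne, Subgraph.mem_edgeSet.mpr (heq.trans (he : fM m x = y))⟩

lemma forcing_pmSub (m : Fin 6) : forcingNum (GP 5 2) (pmSub m) = 2 := by
  obtain ⟨a, b, hab, huniq⟩ := two_force m
  have h2 : (2 : ℕ) ∈ {k | ∃ S : Set (Sym2 V5), IsForcingSet (GP 5 2) (pmSub m) S ∧
      S.ncard = k} := by
    refine ⟨{s(a, fM m a), s(b, fM m b)}, ⟨?_, ?_⟩, Set.ncard_pair hab⟩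
    · rintro e (rfl | rfl)
      · exact Subgraph.mem_edgeSet.mpr rfl
      · exact Subgraph.mem_edgeSet.mpr rfl
    · intro M' hM' hsub
      obtain ⟨m', rfl⟩ := classify M' hM'
      have h1 : fM m' a = fM m a :=
        Subgraph.mem_edgeSet.mp (hsub (Set.mem_insert _ _))
      have hb : fM m' b = fM m b :=
        Subgraph.mem_edgeSet.mp (hsub (Set.mem_insert_of_mem _ rfl))
      exact congrArg pmSub (huniq m' h1 hb)
  refine le_antisymm (Nat.sInf_le h2) (le_csInf ⟨2, h2⟩ ?_)
  rintro k ⟨S, ⟨hsub, hforce⟩, hcard⟩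
  by_contra hk
  interval_cases k
  · have hS : S = ∅ := (Set.ncard_eq_zero S.toFinite).mp hcard
    obtain ⟨m', hne⟩ := exists_ne m
    exact hne (pmSub_injective
      (hforce (pmSub m') (pmSub_pm m') (by simp [hS])))
  · obtain ⟨e, rfl⟩ := Set.ncard_eq_one.mp hcard
    have he : e ∈ (pmSub m).edgeSet := hsub rfl
    obtain ⟨m', hne, he'⟩ := singleton_not_forcing' m e he
    exact hne (pmSub_injective
      (hforce (pmSub m') (pmSub_pm m') (Set.singleton_subset_iff.mpr he')))

theorem stmt4 :
    (∀ M : (GP 5 2).Subgraph, M.IsPerfectMatching → forcingNum (GP 5 2) M = 2) ∧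
    {M : (GP 5 2).Subgraph | M.IsPerfectMatching}.ncard = 6 := by
  constructor
  · intro M hM
    obtain ⟨m, rfl⟩ := classify M hM
    exact forcing_pmSub m
  · have hset : {M : (GP 5 2).Subgraph | M.IsPerfectMatching} = Set.range pmSub := by
      ext M
      constructor
      · intro hM
        obtain ⟨m, rfl⟩ := classify M hM
        exact ⟨m, rfl⟩
      · rintro ⟨m, rfl⟩
        exact pmSub_pm m
    rw [hset, ← Set.image_univ, Set.ncard_image_of_injective _ pmSub_injective,
      Set.ncard_univ, Nat.card_eq_fintype_card, Fintype.card_fin]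
end
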